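/- Let G be an amenable group and I an invariant ideal on G. Then I ⊆ N_I ⊆ S_I; that is, every subset A ⊆ G satisfying μ(A) = 0 for every Banach measure μ on G with I ⊆ N_μ is I-small. -/

import Mathlib

open scoped Pointwise Topology

/-- A subset `A` of a group `G` is *large* if `F * A = G` for some finite `F ⊆ G`. -/
def IsLarge {G : Type*} [Group G] (A : Set G) : Prop :=
  ∃ F : Finset G, (F : Set G) * A = Set.univ

/-- A subset `A` of a group `G` is *small* if `B \ A` is large for every large `B ⊆ G`. -/
def IsSmallSet {G : Type*} [Group G] (A : Set G) : Prop :=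
  ∀ B : Set G, IsLarge B → IsLarge (B \ A)

/-- A translation-invariant ideal on a group `G`: a proper family of subsets of `G`
containing the empty set, closed under subsets, finite unions and left translations. -/
structure IsInvariantIdeal (G : Type*) [Group G] (I : Set (Set G)) : Prop where
  proper : I ≠ Set.univ
  empty_mem : ∅ ∈ I
  subset_mem : ∀ ⦃A B : Set G⦄, A ∈ I → B ⊆ A → B ∈ I
  union_mem : ∀ ⦃A B : Set G⦄, A ∈ I → B ∈ I → A ∪ B ∈ I
  translate_mem : ∀ (x : G) ⦃A : Set G⦄, A ∈ I → (fun a => x * a) '' A ∈ I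

/-- A subset `A ⊆ G` is `I`-large if `G \ FA ∈ I` for some finite `F ⊆ G`. -/
def IsILarge {G : Type*} [Group G] (I : Set (Set G)) (A : Set G) : Prop :=
  ∃ F : Finset G, (Set.univ : Set G) \ ((F : Set G) * A) ∈ I

/-- A subset `A ⊆ G` is `I`-small if `L \ A` is `I`-large for every `I`-large `L ⊆ G`. -/
def IsISmall {G : Type*} [Group G] (I : Set (Set G)) (A : Set G) : Prop :=
  ∀ L : Set G, IsILarge I L → IsILarge I (L \ A)

/-- A *Banach measure* on a group `G`: a finitely additive, left-invariant probability
"measure" defined on all subsets of `G`, with values in `[0,1]`. -/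
structure BanachMeasure (G : Type*) [Group G] where
  toFun : Set G → ℝ
  nonneg : ∀ A : Set G, 0 ≤ toFun A
  le_one : ∀ A : Set G, toFun A ≤ 1
  additive : ∀ A B : Set G, Disjoint A B → toFun (A ∪ B) = toFun A + toFun B
  measure_univ : toFun Set.univ = 1
  invariant : ∀ (x : G) (A : Set G), toFun ((fun a => x * a) '' A) = toFun A

/-- The Følner condition: for every finite `F ⊆ G` and `ε > 0` there is a nonempty finite
`E ⊆ G` with `|E △ xE| < ε·|E|` for all `x ∈ F`.  A group is *amenable* iff it satisfies it. -/
def FolnerCond (G : Type*) [Group G] : Prop :=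
  ∀ (F : Finset G) (ε : ℝ), 0 < ε → ∃ E : Finset G, E.Nonempty ∧
    ∀ x ∈ F, ((symmDiff (E : Set G) ((fun a => x * a) '' (E : Set G))).ncard : ℝ) < ε * E.card

open Filter Set Function

section AuxLemmas

variable {G : Type*} [Group G]

lemma IsInvariantIdeal.biUnion_mem {I : Set (Set G)} (hI : IsInvariantIdeal G I)
    (E : Finset G) (C : G → Set G) (hC : ∀ e ∈ E, C e ∈ I) : (⋃ e ∈ E, C e) ∈ I := by
  classical
  induction E using Finset.induction with
  | empty => simpa using hI.empty_mem
  | @insert a s ha ih =>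
    rw [Finset.set_biUnion_insert]
    exact hI.union_mem (hC a (Finset.mem_insert_self a s))
      (ih fun e he => hC e (Finset.mem_insert_of_mem he))

lemma ncard_inter_sub_bound {α : Type*} {T T' : Set α} (hT : T.Finite) (hT' : T'.Finite)
    (S : Set α) : (S ∩ T').ncard ≤ (S ∩ T).ncard + (symmDiff T' T).ncard := by
  have hsub : S ∩ T' ⊆ (S ∩ T) ∪ (T' \ T) := fun x hx => by
    by_cases h : x ∈ T
    · exact Or.inl ⟨hx.1, h⟩
    · exact Or.inr ⟨hx.2, h⟩
  calc (S ∩ T').ncard ≤ ((S ∩ T) ∪ (T' \ T)).ncard :=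
        Set.ncard_le_ncard hsub ((hT.inter_of_right S).union (hT'.diff))
    _ ≤ (S ∩ T).ncard + (T' \ T).ncard := Set.ncard_union_le _ _
    _ ≤ (S ∩ T).ncard + (symmDiff T' T).ncard := by
        have h1 : T' \ T ⊆ symmDiff T' T := by
          rw [Set.symmDiff_def]; exact Set.subset_union_left
        have h2 : (symmDiff T' T).Finite := by
          rw [Set.symmDiff_def]; exact (hT'.diff).union hT.diff
        exact Nat.add_le_add_left (Set.ncard_le_ncard h1 h2) _

/-- Index type for the net of averaging sets. -/
structure FIdx (G : Type*) [Group G] (I : Set (Set G)) where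
  F : Finset G
  n : ℕ
  C : Set G
  hC : C ∈ I

lemma exists_banach_measure_null (hG : FolnerCond G)
    {I : Set (Set G)} (hI : IsInvariantIdeal G I) {B : Set G} (hB : ¬ IsILarge I B) :
    ∃ μ : BanachMeasure G, (∀ C ∈ I, μ.toFun C = 0) ∧ μ.toFun B = 0 := by
  classical
  have hEx : ∀ i : FIdx G I, ∃ (E : Finset G) (g : G), E.Nonempty ∧
      (∀ x ∈ i.F, ((symmDiff (E : Set G) ((fun a => x * a) '' (E : Set G))).ncard : ℝ)
        < (1 / (i.n + 1)) * E.card) ∧ ∀ e ∈ E, e * g ∉ i.C ∪ B := by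
    intro i
    obtain ⟨E, hne, hFol⟩ := hG i.F (1 / (i.n + 1)) (by positivity)
    have hg : ∃ g : G, ∀ e ∈ E, e * g ∉ i.C ∪ B := by
      by_contra hcon
      push_neg at hcon
      apply hB
      refine ⟨E.image (·⁻¹), hI.subset_mem (hI.biUnion_mem E
        (fun e => (fun a => e⁻¹ * a) '' i.C) (fun e _ => hI.translate_mem _ i.hC)) ?_⟩
      rintro g ⟨-, hg2⟩
      obtain ⟨e, he, hmem⟩ := hcon g
      rcases hmem with hc | hb
      · exact Set.mem_biUnion he ⟨e * g, hc, by group⟩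
      · refine absurd (Set.mem_mul.mpr ⟨e⁻¹, ?_, e * g, hb, by group⟩) hg2
        simp only [Finset.coe_image, Set.mem_image, Finset.mem_coe]
        exact ⟨e, he, rfl⟩
    obtain ⟨g, hg⟩ := hg
    exact ⟨E, g, hne, hFol, hg⟩
  choose E g hne hFol havoid using hEx
  set T : FIdx G I → Set G := fun i => (fun e => e * g i) '' ((E i : Set G)) with hT
  have hTfin : ∀ i, (T i).Finite := fun i => ((E i).finite_toSet).image _
  have hTcard : ∀ i, (T i).ncard = (E i).card := fun i => by
    rw [hT, Set.ncard_image_of_injective _ (mul_left_injective (g i)), Set.ncard_coe_finset]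
  have hcardpos : ∀ i, (0 : ℝ) < (E i).card := fun i => by
    exact_mod_cast (hne i).card_pos
  set f : FIdx G I → Set G → ℝ := fun i S => ((S ∩ T i).ncard : ℝ) / (E i).card with hf
  have f_nonneg : ∀ i S, 0 ≤ f i S := fun i S => by positivity
  have f_le_one : ∀ i S, f i S ≤ 1 := fun i S => by
    rw [hf, div_le_one (hcardpos i)]
    exact_mod_cast (hTcard i) ▸ Set.ncard_le_ncard Set.inter_subset_right (hTfin i)
  have f_univ : ∀ i, f i Set.univ = 1 := fun i => by
    rw [hf]; simp only [Set.univ_inter, hTcard i]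
    exact div_self (ne_of_gt (hcardpos i))
  have f_add : ∀ i (S S' : Set G), Disjoint S S' → f i (S ∪ S') = f i S + f i S' := by
    intro i S S' hd
    rw [hf]
    simp only
    rw [Set.union_inter_distrib_right, Set.ncard_union_eq
      (hd.mono Set.inter_subset_left Set.inter_subset_left)
      ((hTfin i).inter_of_right S) ((hTfin i).inter_of_right S')]
    push_cast
    ring
  have f_zero : ∀ i (S : Set G), S ⊆ i.C ∪ B → f i S = 0 := by
    intro i S hS
    have : S ∩ T i = ∅ := by
      ext x
      simp only [Set.mem_inter_iff, Set.mem_empty_iff_false, iff_false, not_and]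
      rintro hxS ⟨e, he, rfl⟩
      exact havoid i e he (hS hxS)
    rw [hf]; simp [this]
  have f_inv : ∀ i (x : G), x ∈ i.F → ∀ S : Set G,
      |f i ((fun a => x * a) '' S) - f i S| ≤ 1 / (i.n + 1) := by
    intro i x hx S
    set T' : Set G := (fun a => x⁻¹ * a) '' T i with hT'
    have hT'fin : T'.Finite := (hTfin i).image _
    have hnum : (((fun a => x * a) '' S) ∩ T i).ncard = (S ∩ T').ncard := by
      rw [← Set.ncard_image_of_injective ((((fun a => x * a) '' S) ∩ T i))
        (mul_right_injective x⁻¹), Set.image_inter (mul_right_injective x⁻¹)]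
      congr 2
      rw [← Set.image_comp]
      simp [Function.comp_def]
    have hd : (symmDiff T' (T i)).ncard
        = (symmDiff ((E i : Set G)) ((fun a => x * a) '' (E i : Set G))).ncard := by
      have h1 : T' = (fun e => e * g i) '' ((fun a => x⁻¹ * a) '' (E i : Set G)) := by
        rw [hT', hT]
        rw [← Set.image_comp, ← Set.image_comp]
        simp [Function.comp_def, mul_assoc]
      have h2 : symmDiff T' (T i) = (fun e => e * g i) ''
          (symmDiff ((fun a => x⁻¹ * a) '' (E i : Set G)) (E i : Set G)) := by
        rw [h1, hT, Set.image_symmDiff (mul_left_injective (g i))]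
      have h3 : symmDiff ((fun a => x⁻¹ * a) '' (E i : Set G)) ((E i : Set G))
          = (fun a => x⁻¹ * a) '' (symmDiff ((E i : Set G)) ((fun a => x * a) '' (E i : Set G))) := by
        rw [Set.image_symmDiff (mul_right_injective x⁻¹)]
        congr 1
        rw [← Set.image_comp]
        simp [Function.comp_def]
      rw [h2, h3, Set.ncard_image_of_injective _ (mul_left_injective (g i)),
        Set.ncard_image_of_injective _ (mul_right_injective x⁻¹)]
    have hbound1 := ncard_inter_sub_bound (hTfin i) hT'fin S
    have hbound2 := ncard_inter_sub_bound hT'fin (hTfin i) S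
    rw [symmDiff_comm] at hbound2
    set d := (symmDiff T' (T i)).ncard
    have hb1 : ((S ∩ T').ncard : ℝ) ≤ ((S ∩ T i).ncard : ℝ) + d := by exact_mod_cast hbound1
    have hb2 : ((S ∩ T i).ncard : ℝ) ≤ ((S ∩ T').ncard : ℝ) + d := by exact_mod_cast hbound2
    have habs : |((S ∩ T').ncard : ℝ) - ((S ∩ T i).ncard : ℝ)| ≤ d :=
      abs_sub_le_iff.mpr ⟨by linarith, by linarith⟩
    have hfeq : f i ((fun a => x * a) '' S) - f i S
        = (((S ∩ T').ncard : ℝ) - ((S ∩ T i).ncard : ℝ)) / (E i).card := by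
      rw [hf]
      simp only
      rw [hnum, div_sub_div_same]
    rw [hfeq, abs_div, abs_of_pos (hcardpos i)]
    have hdlt : (d : ℝ) < (1 / (i.n + 1)) * (E i).card := by
      rw [hd]; exact hFol i x hx
    calc |((S ∩ T').ncard : ℝ) - ((S ∩ T i).ncard : ℝ)| / (E i).card
        ≤ (d : ℝ) / (E i).card := by gcongr
      _ ≤ 1 / (i.n + 1) := by
          rw [div_le_iff₀ (hcardpos i)]
          exact le_of_lt hdlt
  -- directed filter and ultrafilter
  haveI : Nonempty (FIdx G I) := ⟨⟨∅, 0, ∅, hI.empty_mem⟩⟩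
  set base : FIdx G I → Set (FIdx G I) :=
    fun j => {i | j.F ⊆ i.F ∧ j.n ≤ i.n ∧ j.C ⊆ i.C} with hbasedef
  have hdir : Directed (· ≥ ·) (fun j => (𝓟 (base j) : Filter (FIdx G I))) := by
    intro j k
    refine ⟨⟨j.F ∪ k.F, max j.n k.n, j.C ∪ k.C, hI.union_mem j.hC k.hC⟩, ?_, ?_⟩
    · show 𝓟 _ ≤ 𝓟 _
      rw [le_principal_iff, mem_principal]
      rintro i ⟨h1, h2, h3⟩
      exact ⟨(Finset.subset_union_left).trans h1, (le_max_left _ _).trans h2,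
        Set.subset_union_left.trans h3⟩
    · show 𝓟 _ ≤ 𝓟 _
      rw [le_principal_iff, mem_principal]
      rintro i ⟨h1, h2, h3⟩
      exact ⟨(Finset.subset_union_right).trans h1, (le_max_right _ _).trans h2,
        Set.subset_union_right.trans h3⟩
  haveI hnb : (⨅ j, 𝓟 (base j) : Filter (FIdx G I)).NeBot :=
    Filter.iInf_neBot_of_directed hdir fun j =>
      Filter.principal_neBot_iff.mpr ⟨j, subset_rfl, le_rfl, subset_rfl⟩
  set U := Ultrafilter.of (⨅ j, 𝓟 (base j) : Filter (FIdx G I)) with hU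
  have hbase : ∀ j, base j ∈ U := fun j =>
    Ultrafilter.of_le _ (Filter.mem_iInf_of_mem j (Filter.mem_principal_self _))
  have hlim : ∀ S : Set G, ∃ r, r ∈ Set.Icc (0:ℝ) 1 ∧
      Tendsto (fun i => f i S) (U : Filter (FIdx G I)) (𝓝 r) := by
    intro S
    obtain ⟨r, hr, hle⟩ := (isCompact_Icc (a := (0:ℝ)) (b := 1)).ultrafilter_le_nhds
      (Ultrafilter.map (fun i => f i S) U) (by
        rw [Ultrafilter.coe_map, le_principal_iff, Filter.mem_map]
        exact Filter.univ_mem' fun i => ⟨f_nonneg i S, f_le_one i S⟩)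
    rw [Ultrafilter.coe_map] at hle
    exact ⟨r, hr, hle⟩
  choose μf hIcc hten using hlim
  refine ⟨⟨μf, fun S => (hIcc S).1, fun S => (hIcc S).2, ?_, ?_, ?_⟩, ?_, ?_⟩
  · intro S S' hd
    exact tendsto_nhds_unique (hten (S ∪ S'))
      (((hten S).add (hten S')).congr fun i => (f_add i S S' hd).symm)
  · exact tendsto_nhds_unique (hten Set.univ)
      (tendsto_const_nhds.congr fun i => (f_univ i).symm)
  · intro x S
    have hnat : Tendsto (fun i : FIdx G I => i.n) (U : Filter _) atTop := by
      rw [tendsto_atTop]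
      intro b
      filter_upwards [hbase ⟨∅, b, ∅, hI.empty_mem⟩] with i hi
      exact hi.2.1
    have hb0 : Tendsto (fun i : FIdx G I => 1 / ((i.n : ℝ) + 1)) (U : Filter _) (𝓝 0) :=
      tendsto_one_div_add_atTop_nhds_zero_nat.comp hnat
    have hdiff : Tendsto (fun i => f i ((fun a => x * a) '' S) - f i S)
        (U : Filter _) (𝓝 0) := by
      refine squeeze_zero_norm' ?_ hb0
      filter_upwards [hbase ⟨{x}, 0, ∅, hI.empty_mem⟩] with i hi
      rw [Real.norm_eq_abs]
      exact f_inv i x (hi.1 (Finset.mem_singleton_self x)) S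
    have h2 : Tendsto (fun i => f i ((fun a => x * a) '' S)) (U : Filter _) (𝓝 (0 + μf S)) :=
      (hdiff.add (hten S)).congr fun i => by ring
    have h3 := tendsto_nhds_unique (hten _) h2
    rw [h3, zero_add]
  · intro C hC
    refine tendsto_nhds_unique (hten C) (Filter.Tendsto.congr' ?_ tendsto_const_nhds)
    filter_upwards [hbase ⟨∅, 0, C, hC⟩] with i hi
    exact (f_zero i C fun y hy => Or.inl (hi.2.2 hy)).symm
  · exact tendsto_nhds_unique (hten B)
      (tendsto_const_nhds.congr fun i => (f_zero i B fun y hy => Or.inr hy).symm)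

end AuxLemmas

section MeasureAux

variable {G : Type*} [Group G]

lemma BanachMeasure.empty_zero (μ : BanachMeasure G) : μ.toFun ∅ = 0 := by
  have h := μ.additive ∅ ∅ (by simp)
  simp only [Set.union_empty] at h
  linarith

lemma BanachMeasure.mono (μ : BanachMeasure G) {S T : Set G} (h : S ⊆ T) :
    μ.toFun S ≤ μ.toFun T := by
  have hadd := μ.additive S (T \ S) disjoint_sdiff_self_right
  rw [Set.union_diff_cancel h] at hadd
  have := μ.nonneg (T \ S)
  linarith

lemma BanachMeasure.union_le (μ : BanachMeasure G) (S T : Set G) :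
    μ.toFun (S ∪ T) ≤ μ.toFun S + μ.toFun T := by
  have hadd := μ.additive S (T \ S) disjoint_sdiff_self_right
  rw [Set.union_diff_self] at hadd
  have := μ.mono (Set.diff_subset : T \ S ⊆ T)
  linarith

lemma BanachMeasure.finset_mul_le (μ : BanachMeasure G) (F : Finset G) (S : Set G) :
    μ.toFun ((F : Set G) * S) ≤ F.card * μ.toFun S := by
  classical
  induction F using Finset.induction with
  | empty => simp [Set.empty_mul, μ.empty_zero]
  | @insert a s ha ih =>
    have hins : ((insert a s : Finset G) : Set G) * S
        = ((fun y => a * y) '' S) ∪ (s : Set G) * S := by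
      rw [Finset.coe_insert, Set.insert_eq, Set.union_mul, Set.singleton_mul]
    rw [hins, Finset.card_insert_of_notMem ha]
    push_cast
    calc μ.toFun (((fun y => a * y) '' S) ∪ (s : Set G) * S)
        ≤ μ.toFun ((fun y => a * y) '' S) + μ.toFun ((s : Set G) * S) := μ.union_le _ _
      _ = μ.toFun S + μ.toFun ((s : Set G) * S) := by rw [μ.invariant]
      _ ≤ μ.toFun S + s.card * μ.toFun S := by linarith
      _ = (s.card + 1) * μ.toFun S := by ring

end MeasureAux

theorem ideal_subset_nCompletion_subset_sCompletion {G : Type*} [Group G]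
    (hG : FolnerCond G) (I : Set (Set G)) (hI : IsInvariantIdeal G I) :
    (∀ A ∈ I, ∀ μ : BanachMeasure G, (∀ B ∈ I, μ.toFun B = 0) → μ.toFun A = 0) ∧
    (∀ A : Set G,
      (∀ μ : BanachMeasure G, (∀ B ∈ I, μ.toFun B = 0) → μ.toFun A = 0) → IsISmall I A) := by
  refine ⟨fun A hA μ hμ => hμ A hA, ?_⟩
  intro A hA L hL
  by_contra hLA
  obtain ⟨μ, hμI, hμB⟩ := exists_banach_measure_null hG hI hLA
  obtain ⟨F, hF⟩ := hL
  have hFL : μ.toFun ((F : Set G) * L) = 1 := by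
    have hadd := μ.additive ((F : Set G) * L) (Set.univ \ ((F : Set G) * L))
      disjoint_sdiff_self_right
    rw [Set.union_diff_cancel (Set.subset_univ _), μ.measure_univ, hμI _ hF] at hadd
    linarith
  have hL0 : μ.toFun L = 0 := by
    have h1 : μ.toFun L ≤ μ.toFun (L ∩ A) + μ.toFun (L \ A) := by
      have := μ.union_le (L ∩ A) (L \ A)
      rwa [Set.inter_union_diff] at this
    have h2 : μ.toFun (L ∩ A) ≤ μ.toFun A := μ.mono Set.inter_subset_right
    have h3 := hA μ hμI
    have h4 := μ.nonneg L
    linarith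
  have h5 := μ.finset_mul_le F L
  rw [hFL, hL0] at h5
  norm_num at h5
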